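/- arXiv:1602.03713 — 2 statements merged into one kernel-verified Lean document; each statement's English description precedes it below -/
import Mathlib

section
/- Let G=(V,E) be a finite simple graph with positive vertex weights w, let ε>0, set ε'=ε/(2+ε), and let δ be a G-valid edge-weight function. Then for every vertex cover S_OPT of G, the total weight of the set S_δ = {v ∈ V : w(v) − ∑_{e∈E: v∈e} δ(e) ≤ ε'·w(v)} satisfies ∑_{v∈S_δ} w(v) ≤ (2+ε)·∑_{v∈S_OPT} w(v). In particular, if S_δ is itself a vertex cover, it is a (2+ε)-approximation for minimum weight vertex cover. -/
open Finset

lemma swap_sum {V : Type*} [Fintype V] [DecidableEq V] (E : Finset (Sym2 V))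
    (S : Finset V) (δ : Sym2 V → ℝ) :
    ∑ v ∈ S, ∑ e ∈ E.filter (fun e => v ∈ e), δ e
      = ∑ e ∈ E, ((S.filter (fun v => v ∈ e)).card : ℝ) * δ e := by
  simp only [Finset.sum_filter]
  rw [Finset.sum_comm]
  congr 1
  ext e
  rw [← Finset.sum_filter, Finset.sum_const, nsmul_eq_mul]

lemma card_mem_le_two {V : Type*} [Fintype V] [DecidableEq V] (S : Finset V)
    (e : Sym2 V) : (S.filter (fun v => v ∈ e)).card ≤ 2 := by
  induction e using Sym2.ind with
  | _ a b =>
    calc (S.filter (fun v => v ∈ s(a, b))).card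
        ≤ ({a, b} : Finset V).card := by
          apply Finset.card_le_card
          intro v hv
          simp only [Finset.mem_filter, Sym2.mem_iff] at hv
          simp [hv.2]
      _ ≤ 2 := Finset.card_insert_le _ _ |>.trans (by simp)

/-- Local-ratio template for minimum weight vertex cover: if `δ` is a `G`-valid
edge-weight function, then the total weight of
`S_δ = {v : w v − ∑_{e ∋ v} δ e ≤ ε' · w v}` is at most `(2+ε)` times the weight
of any vertex cover, in particular of a minimum weight vertex cover. -/
theorem stmt_0 {V : Type*} [Fintype V] [DecidableEq V] (G : SimpleGraph V)
    [DecidableRel G.Adj] (w : V → ℝ) (hw : ∀ v, 0 < w v)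
    (ε : ℝ) (hε : 0 < ε) (ε' : ℝ) (hε' : ε' = ε / (2 + ε))
    (δ : Sym2 V → ℝ) (hδ0 : ∀ e ∈ G.edgeFinset, 0 ≤ δ e)
    (hvalid : ∀ v : V, ∑ e ∈ G.edgeFinset.filter (fun e => v ∈ e), δ e ≤ w v)
    (Sδ : Finset V)
    (hSδ : ∀ v : V, v ∈ Sδ ↔
      w v - ∑ e ∈ G.edgeFinset.filter (fun e => v ∈ e), δ e ≤ ε' * w v)
    (SOPT : Finset V)
    (hcover : ∀ e ∈ G.edgeFinset, ∃ v ∈ SOPT, v ∈ e) :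
    ∑ v ∈ Sδ, w v ≤ (2 + ε) * ∑ v ∈ SOPT, w v := by
  have h2ε : (0:ℝ) < 2 + ε := by linarith
  have hε'lt : 1 - ε' = 2 / (2 + ε) := by
    rw [hε']; field_simp; ring
  -- step 1: (1-ε') ∑_{Sδ} w ≤ ∑_{v ∈ Sδ} ∑_{e ∋ v} δ e
  have h1 : (1 - ε') * ∑ v ∈ Sδ, w v ≤ ∑ v ∈ Sδ, ∑ e ∈ G.edgeFinset.filter (fun e => v ∈ e), δ e := by
    rw [Finset.mul_sum]
    apply Finset.sum_le_sum
    intro v hv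
    have := (hSδ v).mp hv
    linarith [this]
  -- step 2: double count
  have h2 : ∑ v ∈ Sδ, ∑ e ∈ G.edgeFinset.filter (fun e => v ∈ e), δ e
      ≤ 2 * ∑ e ∈ G.edgeFinset, δ e := by
    rw [swap_sum, Finset.mul_sum]
    apply Finset.sum_le_sum
    intro e he
    have := card_mem_le_two Sδ e
    have hδ := hδ0 e he
    have : ((Sδ.filter (fun v => v ∈ e)).card : ℝ) ≤ 2 := by exact_mod_cast this
    nlinarith
  -- step 3: total δ ≤ weight of cover
  have h3 : ∑ e ∈ G.edgeFinset, δ e ≤ ∑ v ∈ SOPT, w v := by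
    calc ∑ e ∈ G.edgeFinset, δ e
        ≤ ∑ e ∈ G.edgeFinset, ((SOPT.filter (fun v => v ∈ e)).card : ℝ) * δ e := by
          apply Finset.sum_le_sum
          intro e he
          have hδ := hδ0 e he
          obtain ⟨v, hvS, hve⟩ := hcover e he
          have hcard : 1 ≤ (SOPT.filter (fun v => v ∈ e)).card := by
            apply Finset.card_pos.mpr
            exact ⟨v, Finset.mem_filter.mpr ⟨hvS, hve⟩⟩
          have : (1:ℝ) ≤ ((SOPT.filter (fun v => v ∈ e)).card : ℝ) := by exact_mod_cast hcard
          nlinarith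
      _ = ∑ v ∈ SOPT, ∑ e ∈ G.edgeFinset.filter (fun e => v ∈ e), δ e := (swap_sum _ _ _).symm
      _ ≤ ∑ v ∈ SOPT, w v := Finset.sum_le_sum (fun v _ => hvalid v)
  -- combine
  have key : (1 - ε') * ∑ v ∈ Sδ, w v ≤ 2 * ∑ v ∈ SOPT, w v := by linarith
  rw [hε'lt] at key
  have h2div : (2:ℝ) / (2 + ε) > 0 := by positivity
  calc ∑ v ∈ Sδ, w v = (2 + ε) / 2 * (2 / (2 + ε) * ∑ v ∈ Sδ, w v) := by
        field_simp
    _ ≤ (2 + ε) / 2 * (2 * ∑ v ∈ SOPT, w v) := by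
        apply mul_le_mul_of_nonneg_left key; positivity
    _ = (2 + ε) * ∑ v ∈ SOPT, w v := by ring
end

section
/- Let G=(V,E) be a finite simple graph with positive vertex weights w, let ε>0, set ε'=ε/(2+ε), and let δ be a G-valid edge-weight function. Then the total weight of the set S_δ = {v ∈ V : w(v) − ∑_{e∈E: v∈e} δ(e) ≤ ε'·w(v)} satisfies ∑_{v∈S_δ} w(v) ≤ (2/(1−ε'))·∑_{e∈E} δ(e). -/
open Finset

lemma card_mem_sym2_le_two {V : Type*} [Fintype V] [DecidableEq V] (e : Sym2 V) :
    (Finset.univ.filter (fun v => v ∈ e)).card ≤ 2 := by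
  induction e with
  | _ a b =>
    have h : (Finset.univ.filter (fun v => v ∈ s(a, b))) ⊆ {a, b} := by
      intro v hv
      simp only [mem_filter, Sym2.mem_iff] at hv
      simp [hv.2]
    calc _ ≤ ({a, b} : Finset V).card := Finset.card_le_card h
    _ ≤ 2 := Finset.card_insert_le a {b} |>.trans (by simp)

/-- For a `G`-valid edge-weight function `δ`, the total weight of
`S_δ = {v : w v − ∑_{e ∋ v} δ e ≤ ε' · w v}` is at most
`(2/(1−ε')) · ∑_{e ∈ E} δ e`. -/
theorem stmt_4 {V : Type*} [Fintype V] [DecidableEq V] (G : SimpleGraph V)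
    [DecidableRel G.Adj] (w : V → ℝ) (hw : ∀ v, 0 < w v)
    (ε : ℝ) (hε : 0 < ε) (ε' : ℝ) (hε' : ε' = ε / (2 + ε))
    (δ : Sym2 V → ℝ) (hδ0 : ∀ e ∈ G.edgeFinset, 0 ≤ δ e)
    (hvalid : ∀ v : V, ∑ e ∈ G.edgeFinset.filter (fun e => v ∈ e), δ e ≤ w v)
    (Sδ : Finset V)
    (hSδ : ∀ v : V, v ∈ Sδ ↔
      w v - ∑ e ∈ G.edgeFinset.filter (fun e => v ∈ e), δ e ≤ ε' * w v) :
    ∑ v ∈ Sδ, w v ≤ (2 / (1 - ε')) * ∑ e ∈ G.edgeFinset, δ e := by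
  have hε'lt : ε' < 1 := by
    rw [hε']
    rw [div_lt_one (by linarith)]
    linarith
  have h1 : 0 < 1 - ε' := by linarith
  -- key: (1 - ε') * ∑_{v ∈ Sδ} w v ≤ 2 * ∑ δ e
  have key : (1 - ε') * ∑ v ∈ Sδ, w v ≤ 2 * ∑ e ∈ G.edgeFinset, δ e := by
    have step1 : (1 - ε') * ∑ v ∈ Sδ, w v ≤
        ∑ v ∈ Sδ, ∑ e ∈ G.edgeFinset.filter (fun e => v ∈ e), δ e := by
      rw [Finset.mul_sum]
      apply Finset.sum_le_sum
      intro v hv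
      have := (hSδ v).mp hv
      nlinarith [this]
    have step2 : ∑ v ∈ Sδ, ∑ e ∈ G.edgeFinset.filter (fun e => v ∈ e), δ e
        ≤ 2 * ∑ e ∈ G.edgeFinset, δ e := by
      have swap : ∑ v ∈ Sδ, ∑ e ∈ G.edgeFinset.filter (fun e => v ∈ e), δ e
          = ∑ e ∈ G.edgeFinset, (Sδ.filter (fun v => v ∈ e)).card * δ e := by
        simp_rw [Finset.sum_filter]
        rw [Finset.sum_comm]
        congr 1
        ext e
        rw [← Finset.sum_filter, Finset.sum_const, nsmul_eq_mul]
      rw [swap, Finset.mul_sum]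
      apply Finset.sum_le_sum
      intro e he
      have hcard : ((Sδ.filter (fun v => v ∈ e)).card : ℝ) ≤ 2 := by
        have h2 : (Sδ.filter (fun v => v ∈ e)).card ≤ 2 := by
          refine le_trans (Finset.card_le_card ?_) (card_mem_sym2_le_two e)
          exact Finset.filter_subset_filter _ (Finset.subset_univ _)
        exact_mod_cast h2
      have := hδ0 e he
      nlinarith
    linarith
  rw [div_mul_eq_mul_div, le_div_iff₀ h1]
  linarith [key]
end
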